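/- Under Assumptions A1 and A2, the networked Cournot game with market maker admits at least one Nash equilibrium (q*, f*) with q* ∈ ℝ₊^n and |f*| ≤ c. -/

import Mathlib

open Finset intervalIntegral Filter Topology Set

/-- Existence of a root of `x ↦ p + x*q - D x` for `q < 0`, `D` continuous monotone. -/
lemma stmt10_exists_root (p q : ℝ) (hq : q < 0) (D : ℝ → ℝ) (hDc : Continuous D)
    (hDm : Monotone D) : ∃ x : ℝ, p + x * q - D x = 0 := by
  set c0 := D 0 with hc0
  set b := max 0 ((p - c0 + 1) / (-q)) with hb
  set a := min 0 ((p - c0 - 1) / (-q)) with ha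
  have hab : a ≤ b := le_trans (min_le_left _ _) (le_max_left _ _)
  have hfc : Continuous (fun x : ℝ => p + x * q - D x) := by continuity
  have hfb : p + b * q - D b ≤ -1 := by
    have h1 : D 0 ≤ D b := hDm (le_max_left _ _)
    have h2 : b * q ≤ ((p - c0 + 1) / (-q)) * q := by
      apply mul_le_mul_of_nonpos_right (le_max_right _ _) hq.le
    have h3 : ((p - c0 + 1) / (-q)) * q = -(p - c0 + 1) := by
      rw [div_mul_eq_mul_div, mul_div_assoc, div_neg, div_self hq.ne]
      ring
    nlinarith
  have hfa : 1 ≤ p + a * q - D a := by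
    have h1 : D a ≤ D 0 := hDm (min_le_left _ _)
    have h2 : ((p - c0 - 1) / (-q)) * q ≤ a * q := by
      apply mul_le_mul_of_nonpos_right (min_le_right _ _) hq.le
    have h3 : ((p - c0 - 1) / (-q)) * q = -(p - c0 - 1) := by
      rw [div_mul_eq_mul_div, mul_div_assoc, div_neg, div_self hq.ne]
      ring
    nlinarith
  have := intermediate_value_Icc' hab hfc.continuousOn
    (show (0:ℝ) ∈ Icc (p + b * q - D b) (p + a * q - D a) by constructor <;> linarith)
  obtain ⟨x, _, hx⟩ := this
  exact ⟨x, hx⟩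


/-- Total consumption at market `j`: `(Bf + Hᵀq)_j`. -/
noncomputable def demand {n m l : ℕ} (B : Fin m → Fin l → ℝ) (H : Fin n → Fin m → ℝ)
    (f : Fin l → ℝ) (q : Fin n → ℝ) (j : Fin m) : ℝ :=
  (∑ k, B j k * f k) + ∑ i, H i j * q i

/-- Producer `i`'s utility. -/
noncomputable def producerU {n m l : ℕ} (B : Fin m → Fin l → ℝ) (H : Fin n → Fin m → ℝ)
    (P : Fin m → ℝ → ℝ) (C : Fin n → ℝ → ℝ) (i : Fin n)
    (f : Fin l → ℝ) (q : Fin n → ℝ) : ℝ :=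
  q i * (∑ j, H i j * P j (demand B H f q j)) - C i (q i)

/-- Market maker's (Marshallian welfare) utility. -/
noncomputable def makerW {n m l : ℕ} (B : Fin m → Fin l → ℝ) (H : Fin n → Fin m → ℝ)
    (P : Fin m → ℝ → ℝ) (C : Fin n → ℝ → ℝ)
    (f : Fin l → ℝ) (q : Fin n → ℝ) : ℝ :=
  (∑ j, ∫ s in (0 : ℝ)..(demand B H f q j), P j s) - ∑ i, C i (q i)

/-- Under A1 and A2, the networked Cournot game with market maker admits at
least one Nash equilibrium `(q*, f*)` with `q* ∈ ℝ₊ⁿ` and `|f*| ≤ c`. -/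
theorem stmt10 {n m l : ℕ}
    (B : Fin m → Fin l → ℝ) (hB : ∀ j k, B j k = 0 ∨ B j k = 1 ∨ B j k = -1)
    (H : Fin n → Fin m → ℝ) (c : Fin l → ℝ) (hc : ∀ k, 0 ≤ c k)
    (P : Fin m → ℝ → ℝ) (C : Fin n → ℝ → ℝ)
    -- Assumption A1
    (hPsmooth : ∀ j, ContDiff ℝ 2 (P j))
    (hP' : ∀ j x, deriv (P j) x < 0)
    (hP'' : ∀ j x, deriv (deriv (P j)) x ≤ 0)
    (hPzero : ∀ j, ∃ rbar : ℝ, 0 < rbar ∧ P j rbar = 0)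
    (hCsmooth : ∀ i, ContDiff ℝ 2 (C i))
    (hC' : ∀ i x, 0 ≤ deriv (C i) x)
    (hC'' : ∀ i x, 0 ≤ deriv (deriv (C i)) x)
    -- Assumption A2: each row of H has exactly one entry equal to 1, the rest 0
    (hH01 : ∀ i j, H i j = 0 ∨ H i j = 1)
    (hH1 : ∀ i, ∑ j, H i j = 1) :
    ∃ (qs : Fin n → ℝ) (fs : Fin l → ℝ),
      (∀ i, 0 ≤ qs i) ∧ (∀ k, |fs k| ≤ c k) ∧
      (∀ (i : Fin n) (x : ℝ), 0 ≤ x →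
          producerU B H P C i fs (Function.update qs i x) ≤ producerU B H P C i fs qs) ∧
      (∀ f : Fin l → ℝ, (∀ k, |f k| ≤ c k) →
          makerW B H P C f qs ≤ makerW B H P C fs qs) := by
  classical
  -- ## Smoothness facts
  have hPdiff : ∀ j, Differentiable ℝ (P j) := fun j => (hPsmooth j).differentiable two_ne_zero
  have hPcont : ∀ j, Continuous (P j) := fun j => (hPsmooth j).continuous
  have hPdcont : ∀ j, Continuous (deriv (P j)) := fun j =>
    (hPsmooth j).continuous_deriv one_le_two
  have hPddiff : ∀ j, Differentiable ℝ (deriv (P j)) := by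
    intro j
    have h2 : ContDiff ℝ (1 + 1) (P j) := by
      have : ((2 : ℕ) : WithTop ℕ∞) = 1 + 1 := by norm_num
      rw [← this]; exact_mod_cast hPsmooth j
    exact ((contDiff_succ_iff_deriv.mp h2).2.2).differentiable one_ne_zero
  have hCdiff : ∀ i, Differentiable ℝ (C i) := fun i => (hCsmooth i).differentiable two_ne_zero
  have hCdcont : ∀ i, Continuous (deriv (C i)) := fun i =>
    (hCsmooth i).continuous_deriv one_le_two
  have hCddiff : ∀ i, Differentiable ℝ (deriv (C i)) := by
    intro i
    have h2 : ContDiff ℝ (1 + 1) (C i) := by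
      have : ((2 : ℕ) : WithTop ℕ∞) = 1 + 1 := by norm_num
      rw [← this]; exact_mod_cast hCsmooth i
    exact ((contDiff_succ_iff_deriv.mp h2).2.2).differentiable one_ne_zero
  have hPanti : ∀ j, StrictAnti (P j) := fun j => strictAnti_of_deriv_neg (hP' j)
  have hPdanti : ∀ j, Antitone (deriv (P j)) := fun j =>
    antitone_of_deriv_nonpos (hPddiff j) (hP'' j)
  have hCdmono : ∀ i, Monotone (deriv (C i)) := fun i =>
    monotone_of_deriv_nonneg (hCddiff i) (hC'' i)
  -- ## the market of producer i
  have hmkex : ∀ i, ∃ j, H i j = 1 := by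
    intro i
    by_contra hcon
    push_neg at hcon
    have : ∀ j ∈ Finset.univ, H i j = 0 := by
      intro j _
      rcases hH01 i j with h | h
      · exact h
      · exact absurd h (hcon j)
    have := Finset.sum_eq_zero this
    rw [hH1 i] at this
    norm_num at this
  choose mk hmk1 using hmkex
  have hmk0 : ∀ i j, j ≠ mk i → H i j = 0 := by
    intro i j hne
    have hsplit : ∑ j', H i j' = H i (mk i) + ∑ j' ∈ Finset.univ.erase (mk i), H i j' := by
      rw [Finset.add_sum_erase _ _ (Finset.mem_univ _)]
    rw [hH1 i, hmk1 i] at hsplit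
    have hz : ∑ j' ∈ Finset.univ.erase (mk i), H i j' = 0 := by linarith
    have hnonneg : ∀ j' ∈ Finset.univ.erase (mk i), 0 ≤ H i j' := by
      intro j' _
      rcases hH01 i j' with h | h <;> simp [h]
    have := (Finset.sum_eq_zero_iff_of_nonneg hnonneg).mp hz j (by simp [hne])
    exact this
  -- reference point where price vanishes
  choose rbar hrbarpos hrbar0 using hPzero
  -- ## the FOC function and its root
  have hψex : ∀ (i : Fin n) (d : ℝ),
      ∃ x : ℝ, P (mk i) d + x * deriv (P (mk i)) d - deriv (C i) x = 0 := fun i d =>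
    stmt10_exists_root _ _ (hP' (mk i) d) _ (hCdcont i) (hCdmono i)
  choose ψ hψ using hψex
  have hφanti : ∀ (i : Fin n) (d : ℝ), StrictAnti
      (fun x => P (mk i) d + x * deriv (P (mk i)) d - deriv (C i) x) := by
    intro i d x y hxy
    have h1 := hCdmono i hxy.le
    have h2 := mul_lt_mul_of_neg_right hxy (hP' (mk i) d)
    simp only
    linarith
  have hroot_lt : ∀ (i : Fin n) (d x : ℝ),
      P (mk i) d + x * deriv (P (mk i)) d - deriv (C i) x < 0 → ψ i d < x := by
    intro i d x hx
    by_contra hcon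
    push_neg at hcon
    have h2 : P (mk i) d + ψ i d * deriv (P (mk i)) d - deriv (C i) (ψ i d) ≤
        P (mk i) d + x * deriv (P (mk i)) d - deriv (C i) x := (hφanti i d).antitone hcon
    rw [hψ i d] at h2
    linarith
  have hroot_gt : ∀ (i : Fin n) (d x : ℝ),
      0 < P (mk i) d + x * deriv (P (mk i)) d - deriv (C i) x → x < ψ i d := by
    intro i d x hx
    by_contra hcon
    push_neg at hcon
    have h2 : P (mk i) d + x * deriv (P (mk i)) d - deriv (C i) x ≤
        P (mk i) d + ψ i d * deriv (P (mk i)) d - deriv (C i) (ψ i d) := (hφanti i d).antitone hcon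
    rw [hψ i d] at h2
    linarith
  have hψneg : ∀ (i : Fin n) (d x : ℝ), ψ i d < x →
      P (mk i) d + x * deriv (P (mk i)) d - deriv (C i) x < 0 := by
    intro i d x hx
    have h2 : P (mk i) d + x * deriv (P (mk i)) d - deriv (C i) x <
        P (mk i) d + ψ i d * deriv (P (mk i)) d - deriv (C i) (ψ i d) := hφanti i d hx
    rw [hψ i d] at h2
    exact h2
  have hψpos : ∀ (i : Fin n) (d x : ℝ), x < ψ i d →
      0 < P (mk i) d + x * deriv (P (mk i)) d - deriv (C i) x := by
    intro i d x hx
    have h2 : P (mk i) d + ψ i d * deriv (P (mk i)) d - deriv (C i) (ψ i d) <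
        P (mk i) d + x * deriv (P (mk i)) d - deriv (C i) x := hφanti i d hx
    rw [hψ i d] at h2
    exact h2
  -- monotonicity in the demand variable, for x ≥ 0
  have hφd : ∀ (i : Fin n) (x : ℝ), 0 ≤ x → ∀ (d₁ d₂ : ℝ), d₁ ≤ d₂ →
      P (mk i) d₂ + x * deriv (P (mk i)) d₂ - deriv (C i) x ≤
      P (mk i) d₁ + x * deriv (P (mk i)) d₁ - deriv (C i) x := by
    intro i x hx d₁ d₂ hd
    have h1 : P (mk i) d₂ ≤ P (mk i) d₁ := (hPanti (mk i)).antitone hd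
    have h2 : x * deriv (P (mk i)) d₂ ≤ x * deriv (P (mk i)) d₁ :=
      mul_le_mul_of_nonneg_left (hPdanti (mk i) hd) hx
    linarith
  -- continuity of the root
  have hψcont : ∀ i : Fin n, Continuous (ψ i) := by
    intro i
    rw [continuous_iff_continuousAt]
    intro d
    rw [Metric.continuousAt_iff]
    intro ε hε
    have hcplus : ContinuousAt (fun d' => P (mk i) d' + (ψ i d + ε) * deriv (P (mk i)) d'
        - deriv (C i) (ψ i d + ε)) d :=
      (((hPcont (mk i)).add (continuous_const.mul (hPdcont (mk i)))).sub continuous_const).continuousAt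
    have hcminus : ContinuousAt (fun d' => P (mk i) d' + (ψ i d - ε) * deriv (P (mk i)) d'
        - deriv (C i) (ψ i d - ε)) d :=
      (((hPcont (mk i)).add (continuous_const.mul (hPdcont (mk i)))).sub continuous_const).continuousAt
    have hvplus : P (mk i) d + (ψ i d + ε) * deriv (P (mk i)) d - deriv (C i) (ψ i d + ε) < 0 :=
      hψneg i d _ (by linarith)
    have hvminus : 0 < P (mk i) d + (ψ i d - ε) * deriv (P (mk i)) d - deriv (C i) (ψ i d - ε) :=
      hψpos i d _ (by linarith)
    have h1 : ∀ᶠ d' in 𝓝 d, P (mk i) d' + (ψ i d + ε) * deriv (P (mk i)) d'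
        - deriv (C i) (ψ i d + ε) < 0 := hcplus.eventually_lt_const hvplus
    have h2 : ∀ᶠ d' in 𝓝 d, 0 < P (mk i) d' + (ψ i d - ε) * deriv (P (mk i)) d'
        - deriv (C i) (ψ i d - ε) := hcminus.eventually_const_lt hvminus
    rcases Metric.eventually_nhds_iff.mp (h1.and h2) with ⟨δ, hδ, hball⟩
    refine ⟨δ, hδ, ?_⟩
    intro d' hd'
    obtain ⟨hlt, hgt⟩ := hball hd'
    have hup : ψ i d' < ψ i d + ε := hroot_lt i d' _ hlt
    have hdown : ψ i d - ε < ψ i d' := hroot_gt i d' _ hgt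
    rw [Real.dist_eq, abs_lt]
    constructor <;> linarith
  -- ## the truncated best quantity β
  set β : Fin n → ℝ → ℝ := fun i d => max 0 (ψ i d) with hβdef
  have hβnonneg : ∀ i d, 0 ≤ β i d := fun i d => le_max_left _ _
  have hβcont : ∀ i, Continuous (β i) := fun i => continuous_const.max (hψcont i)
  have hβfoc1 : ∀ i d, P (mk i) d + β i d * deriv (P (mk i)) d - deriv (C i) (β i d) ≤ 0 := by
    intro i d
    have := (hφanti i d).antitone (le_max_right 0 (ψ i d))
    rw [hψ i d] at this
    exact this
  have hβfoc2 : ∀ i d, 0 < β i d →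
      P (mk i) d + β i d * deriv (P (mk i)) d - deriv (C i) (β i d) = 0 := by
    intro i d hpos
    rcases le_or_gt (ψ i d) 0 with h | h
    · rw [hβdef] at hpos; simp only [max_eq_left h] at hpos; linarith
    · rw [hβdef]; simp only [max_eq_right h.le]; exact hψ i d
  have hβanti : ∀ i, Antitone (β i) := by
    intro i d₁ d₂ hd
    refine max_le (le_max_left _ _) ?_
    rcases le_or_gt (ψ i d₂) 0 with h | h
    · exact le_trans h (le_max_left _ _)
    · refine le_trans ?_ (le_max_right 0 (ψ i d₁))
      have h1 := hφd i (ψ i d₂) h.le d₁ d₂ hd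
      rw [hψ i d₂] at h1
      have h2 : P (mk i) d₁ + ψ i d₁ * deriv (P (mk i)) d₁ - deriv (C i) (ψ i d₁) ≤
          P (mk i) d₁ + ψ i d₂ * deriv (P (mk i)) d₁ - deriv (C i) (ψ i d₂) := by
        rw [hψ i d₁]; exact h1
      exact (hφanti i d₁).le_iff_ge.mp h2
  have hβzero : ∀ i d, rbar (mk i) ≤ d → β i d = 0 := by
    intro i d hd
    have hP0 : P (mk i) d ≤ 0 := by
      have := (hPanti (mk i)).antitone hd
      rw [hrbar0 (mk i)] at this
      exact this
    have hf0 : P (mk i) d + 0 * deriv (P (mk i)) d - deriv (C i) 0 ≤ 0 := by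
      have := hC' i 0
      linarith
    have hψle : ψ i d ≤ 0 := by
      by_contra hcon
      push_neg at hcon
      have := hψpos i d 0 hcon
      linarith
    rw [hβdef]
    simp [max_eq_left hψle]
  -- ## per-market aggregate map KK j d = d - total production at demand d
  set KK : Fin m → ℝ → ℝ :=
    fun j d => d - ∑ i ∈ Finset.univ.filter (fun i => mk i = j), β i d with hKKdef
  have hKKmono : ∀ j, StrictMono (KK j) := by
    intro j d₁ d₂ hd
    have hsum : ∑ i ∈ Finset.univ.filter (fun i => mk i = j), β i d₂ ≤
        ∑ i ∈ Finset.univ.filter (fun i => mk i = j), β i d₁ :=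
      Finset.sum_le_sum (fun i _ => hβanti i hd.le)
    simp only [hKKdef]
    linarith
  have hKKcont : ∀ j, Continuous (KK j) := fun j =>
    continuous_id.sub (continuous_finset_sum _ (fun i _ => hβcont i))
  have hKKle : ∀ j d, KK j d ≤ d := by
    intro j d
    have h0 : 0 ≤ ∑ i ∈ Finset.univ.filter (fun i => mk i = j), β i d :=
      Finset.sum_nonneg (fun i _ => hβnonneg i d)
    simp only [hKKdef]
    linarith
  have hKKtop : ∀ j, Tendsto (KK j) atTop atTop := by
    intro j
    have hev : (fun d : ℝ => d) =ᶠ[atTop] KK j := by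
      filter_upwards [eventually_ge_atTop (rbar j)] with d hd
      have hz : ∀ i ∈ Finset.univ.filter (fun i => mk i = j), β i d = 0 := by
        intro i hi
        have hmki : mk i = j := (Finset.mem_filter.mp hi).2
        exact hβzero i d (by rw [hmki]; exact hd)
      simp only [hKKdef]
      rw [Finset.sum_eq_zero hz]
      ring
    exact Tendsto.congr' hev tendsto_id
  have hKKbot : ∀ j, Tendsto (KK j) atBot atBot := fun j =>
    tendsto_atBot_mono (hKKle j) tendsto_id
  have hKKsurj : ∀ j, Function.Surjective (KK j) := fun j =>
    (hKKcont j).surjective (hKKtop j) (hKKbot j)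
  -- the inverse map g : offset b ↦ equilibrium total demand
  set g : Fin m → ℝ → ℝ :=
    fun j => ⇑((hKKmono j).orderIsoOfSurjective _ (hKKsurj j)).symm with hgdef
  have hgKK : ∀ j b, KK j (g j b) = b := fun j b =>
    StrictMono.orderIsoOfSurjective_self_symm_apply _ (hKKmono j) (hKKsurj j) b
  have hgcont : ∀ j, Continuous (g j) := fun j => OrderIso.continuous _
  -- equilibrium price as a function of the offset
  set pr : Fin m → ℝ → ℝ := fun j b => P j (g j b) with hprdef
  have hprcont : ∀ j, Continuous (pr j) := fun j => (hPcont j).comp (hgcont j)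
  -- ## the compact strategy box of the market maker
  set K : Set (Fin l → ℝ) := Set.univ.pi (fun k => Icc (-c k) (c k)) with hKdef
  have hKcompact : IsCompact K := isCompact_univ_pi (fun k => isCompact_Icc)
  have hKne : K.Nonempty := by
    refine ⟨fun _ => 0, ?_⟩
    intro k _
    exact ⟨neg_nonpos.mpr (hc k), hc k⟩
  have hKmem : ∀ f ∈ K, ∀ k, |f k| ≤ c k := by
    intro f hf k
    have := hf k (Set.mem_univ k)
    rw [abs_le]
    exact ⟨this.1, this.2⟩
  have hKmem' : ∀ f : Fin l → ℝ, (∀ k, |f k| ≤ c k) → f ∈ K := by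
    intro f hf k _
    exact ⟨(abs_le.mp (hf k)).1, (abs_le.mp (hf k)).2⟩
  -- ## the surrogate concave objective
  set Fj : Fin m → ℝ → ℝ := fun j y => ∫ s in (0:ℝ)..y, pr j s with hFdef
  have hFderiv : ∀ j y, HasDerivAt (Fj j) (pr j y) y := fun j y =>
    (Continuous.integral_hasStrictDerivAt (hprcont j) 0 y).hasDerivAt
  have hFcont : ∀ j, Continuous (Fj j) :=
    fun j => continuous_iff_continuousAt.mpr (fun y => (hFderiv j y).continuousAt)
  set Lam : (Fin l → ℝ) → ℝ := fun f => ∑ j, Fj j (∑ k, B j k * f k) with hLamdef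
  have hLamcont : Continuous Lam :=
    continuous_finset_sum _ (fun j _ =>
      (hFcont j).comp (continuous_finset_sum _ (fun k _ =>
        continuous_const.mul (continuous_apply k))))
  obtain ⟨fs, hfsK, hfsmax'⟩ := hKcompact.exists_isMaxOn hKne hLamcont.continuousOn
  have hfsmax : ∀ f ∈ K, Lam f ≤ Lam fs := fun f hf => hfsmax' hf
  -- ## the equilibrium point
  set bs : Fin m → ℝ := fun j => ∑ k, B j k * fs k with hbsdef
  set ds : Fin m → ℝ := fun j => g j (bs j) with hdsdef
  set qs : Fin n → ℝ := fun i => β i (ds (mk i)) with hqsdef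
  -- total production in market j
  have hr : ∀ j, ∑ i, H i j * qs i = ds j - bs j := by
    intro j
    have h1 : ∑ i, H i j * qs i = ∑ i ∈ Finset.univ.filter (fun i => mk i = j), qs i := by
      rw [Finset.sum_filter]
      apply Finset.sum_congr rfl
      intro i _
      by_cases hij : mk i = j
      · rw [if_pos hij, ← hij, hmk1 i, one_mul]
      · rw [if_neg hij, hmk0 i j (fun hcon => hij hcon.symm), zero_mul]
    have h2 : ∑ i ∈ Finset.univ.filter (fun i => mk i = j), qs i =
        ∑ i ∈ Finset.univ.filter (fun i => mk i = j), β i (ds j) := by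
      apply Finset.sum_congr rfl
      intro i hi
      have hmki : mk i = j := (Finset.mem_filter.mp hi).2
      simp only [hqsdef, hmki]
    have h3 := hgKK j (bs j)
    simp only [hKKdef] at h3
    rw [h1, h2]
    simp only [hdsdef]
    linarith
  have hdemand : ∀ j, demand B H fs qs j = ds j := by
    intro j
    rw [demand, hr j]
    simp only [hbsdef]
    ring
  refine ⟨qs, fs, fun i => hβnonneg i _, hKmem fs hfsK, ?_, ?_⟩
  · -- ## producer optimality
    intro i x hx
    set dd : ℝ := demand B H fs qs (mk i) - qs i with hdd
    set u : ℝ → ℝ := fun y => y * P (mk i) (dd + y) - C i y with hu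
    set uder : ℝ → ℝ :=
      fun y => P (mk i) (dd + y) + y * deriv (P (mk i)) (dd + y) - deriv (C i) y with huder
    -- rewriting the producer's utility
    have hupd : ∀ y : ℝ, producerU B H P C i fs (Function.update qs i y) = u y := by
      intro y
      have hsum : ∀ q' : Fin n → ℝ,
          (∑ j, H i j * P j (demand B H fs q' j)) = P (mk i) (demand B H fs q' (mk i)) := by
        intro q'
        rw [Finset.sum_eq_single (mk i)]
        · rw [hmk1 i, one_mul]
        · intro b _ hb
          rw [hmk0 i b hb, zero_mul]
        · intro hni
          exact absurd (Finset.mem_univ _) hni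
      have hsplit : ∀ q' : Fin n → ℝ, ∑ i', H i' (mk i) * q' i' =
          H i (mk i) * q' i + ∑ i' ∈ Finset.univ.erase i, H i' (mk i) * q' i' :=
        fun q' => (Finset.add_sum_erase _ _ (Finset.mem_univ i)).symm
      have herase : ∑ i' ∈ Finset.univ.erase i, H i' (mk i) * (Function.update qs i y) i' =
          ∑ i' ∈ Finset.univ.erase i, H i' (mk i) * qs i' := by
        apply Finset.sum_congr rfl
        intro i' hi'
        rw [Function.update_of_ne (Finset.ne_of_mem_erase hi')]
      have hdemu : demand B H fs (Function.update qs i y) (mk i) =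
          demand B H fs qs (mk i) - qs i + y := by
        rw [demand, demand, hsplit (Function.update qs i y), hsplit qs, herase,
          Function.update_self, hmk1 i]
        ring
      rw [producerU, hsum, hdemu, Function.update_self]
      try simp only [hu, hdd]
    have hPq : producerU B H P C i fs qs = u (qs i) := by
      conv_lhs => rw [← Function.update_eq_self i qs]
      exact hupd (qs i)
    rw [hupd x, hPq]
    -- derivative of u
    have huderiv : ∀ y : ℝ, HasDerivAt u (uder y) y := by
      intro y
      have h1 : HasDerivAt (fun y : ℝ => dd + y) 1 y := by
        simpa using (hasDerivAt_id y).const_add dd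
      have h2 : HasDerivAt (fun y : ℝ => P (mk i) (dd + y)) (deriv (P (mk i)) (dd + y)) y := by
        have := ((hPdiff (mk i)) (dd + y)).hasDerivAt.comp y h1
        rw [mul_one] at this; exact this
      have h3 : HasDerivAt (fun y : ℝ => y * P (mk i) (dd + y))
          (1 * P (mk i) (dd + y) + y * deriv (P (mk i)) (dd + y)) y :=
        (hasDerivAt_id y).mul h2
      have h4 := h3.sub ((hCdiff i) y).hasDerivAt
      simp only [hu, huder]
      exact h4.congr_deriv (by ring)
    -- the derivative is antitone on [0, ∞)
    have huantip : ∀ y₁ y₂ : ℝ, 0 ≤ y₁ → y₁ ≤ y₂ → uder y₂ ≤ uder y₁ := by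
      intro y₁ y₂ h0 h12
      have key1 := hφd i y₂ (le_trans h0 h12) (dd + y₁) (dd + y₂) (by linarith)
      have key2 : y₂ * deriv (P (mk i)) (dd + y₁) ≤ y₁ * deriv (P (mk i)) (dd + y₁) :=
        mul_le_mul_of_nonpos_right h12 (hP' (mk i) _).le
      have key3 : deriv (C i) y₁ ≤ deriv (C i) y₂ := hCdmono i h12
      simp only [huder]
      linarith
    -- first-order conditions at qs i
    have hdq : dd + qs i = ds (mk i) := by
      simp only [hdd, hdemand (mk i)]
      ring
    have hsign1 : uder (qs i) ≤ 0 := by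
      have := hβfoc1 i (ds (mk i))
      simp only [huder, hdq]
      simpa only [hqsdef] using this
    have hsign2 : 0 < qs i → uder (qs i) = 0 := by
      intro hpos
      have := hβfoc2 i (ds (mk i)) (by simpa only [hqsdef] using hpos)
      simp only [huder, hdq]
      simpa only [hqsdef] using this
    have hq0 : 0 ≤ qs i := hβnonneg i _
    -- conclude by the mean value theorem
    rcases lt_trichotomy x (qs i) with hlt | heq | hgt
    · have hqpos : 0 < qs i := lt_of_le_of_lt hx hlt
      obtain ⟨ξ, hξmem, hξ⟩ := exists_hasDerivAt_eq_slope u uder hlt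
        (fun y _ => (huderiv y).continuousAt.continuousWithinAt) (fun y _ => huderiv y)
      have h1 : 0 ≤ uder ξ := by
        have := huantip ξ (qs i) (le_trans hx hξmem.1.le) hξmem.2.le
        rw [hsign2 hqpos] at this
        linarith
      rw [hξ] at h1
      rcases div_nonneg_iff.mp h1 with ⟨hA, _⟩ | ⟨_, hB⟩
      · linarith
      · linarith
    · rw [heq]
    · obtain ⟨ξ, hξmem, hξ⟩ := exists_hasDerivAt_eq_slope u uder hgt
        (fun y _ => (huderiv y).continuousAt.continuousWithinAt) (fun y _ => huderiv y)
      have h1 : uder ξ ≤ 0 := le_trans (huantip (qs i) ξ hq0 hξmem.1.le) hsign1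
      rw [hξ] at h1
      rcases div_nonpos_iff.mp h1 with ⟨hA, hB⟩ | ⟨hA, _⟩
      · linarith
      · linarith
  · -- ## maker optimality
    intro f hf
    have hfK : f ∈ K := hKmem' f hf
    set v : Fin m → ℝ := fun j => (∑ k, B j k * f k) - bs j with hvdef
    set GP : Fin m → ℝ → ℝ := fun j y => ∫ s in (0:ℝ)..y, P j s with hGPdef
    have hGPderiv : ∀ j y, HasDerivAt (GP j) (P j y) y := fun j y =>
      (Continuous.integral_hasStrictDerivAt (hPcont j) 0 y).hasDerivAt
    -- the segment from fs to f stays in the box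
    have hseg : ∀ t ∈ Icc (0:ℝ) 1, (fun k => (1 - t) * fs k + t * f k) ∈ K := by
      intro t ht k _
      have h1 := hfsK k (Set.mem_univ k)
      have h2 := hfK k (Set.mem_univ k)
      obtain ⟨h1a, h1b⟩ := h1
      obtain ⟨h2a, h2b⟩ := h2
      show ((1 - t) * fs k + t * f k) ∈ Icc (-c k) (c k)
      constructor
      · nlinarith [mul_nonneg (by linarith [ht.2] : (0:ℝ) ≤ 1 - t)
          (by linarith : (0:ℝ) ≤ fs k + c k), mul_nonneg ht.1 (by linarith : (0:ℝ) ≤ f k + c k)]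
      · nlinarith [mul_nonneg (by linarith [ht.2] : (0:ℝ) ≤ 1 - t)
          (by linarith : (0:ℝ) ≤ c k - fs k), mul_nonneg ht.1 (by linarith : (0:ℝ) ≤ c k - f k)]
    -- the surrogate objective along the segment
    have hsegsum : ∀ (t : ℝ) (j : Fin m),
        ∑ k, B j k * ((1 - t) * fs k + t * f k) = bs j + t * v j := by
      intro t j
      have hcg : ∀ k ∈ Finset.univ, B j k * ((1 - t) * fs k + t * f k) =
          (1 - t) * (B j k * fs k) + t * (B j k * f k) := fun k _ => by ring
      rw [Finset.sum_congr rfl hcg, Finset.sum_add_distrib, ← Finset.mul_sum, ← Finset.mul_sum]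
      simp only [hvdef, hbsdef]
      ring
    have hT : ∀ t ∈ Icc (0:ℝ) 1, (∑ j, Fj j (bs j + t * v j)) ≤ ∑ j, Fj j (bs j) := by
      intro t ht
      have h1 := hfsmax _ (hseg t ht)
      simp only [hLamdef] at h1
      have h3 : ∑ j, Fj j (∑ k, B j k * ((1 - t) * fs k + t * f k)) =
          ∑ j, Fj j (bs j + t * v j) :=
        Finset.sum_congr rfl (fun j _ => by rw [hsegsum t j])
      have h4 : ∑ j, Fj j (∑ k, B j k * fs k) = ∑ j, Fj j (bs j) :=
        Finset.sum_congr rfl (fun j _ => by simp only [hbsdef])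
      rw [h3] at h1
      rw [h4] at h1
      exact h1
    -- derivative of the surrogate along the segment at t = 0
    have hTd : HasDerivAt (fun t : ℝ => ∑ j, Fj j (bs j + t * v j))
        (∑ j, pr j (bs j) * v j) 0 := by
      apply HasDerivAt.fun_sum
      intro j _
      have hin : HasDerivAt (fun t : ℝ => bs j + t * v j) (v j) 0 := by
        simpa using ((hasDerivAt_id (0:ℝ)).mul_const (v j)).const_add (bs j)
      have hcomp := (hFderiv j (bs j + 0 * v j)).comp 0 hin
      simp only [zero_mul, add_zero] at hcomp
      exact hcomp
    -- first-order condition: the directional derivative is nonpositive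
    have hS : (∑ j, pr j (bs j) * v j) ≤ 0 := by
      have hslope := hasDerivAt_iff_tendsto_slope.mp hTd
      have h2 : Tendsto (slope (fun t : ℝ => ∑ j, Fj j (bs j + t * v j)) 0) (𝓝[>] 0)
          (𝓝 (∑ j, pr j (bs j) * v j)) :=
        hslope.mono_left (nhdsWithin_mono 0 (fun x hx => ne_of_gt hx))
      refine le_of_tendsto h2 ?_
      filter_upwards [Ioc_mem_nhdsGT one_pos] with t ht
      have hTt : (∑ j, Fj j (bs j + t * v j)) ≤ ∑ j, Fj j (bs j) := hT t ⟨ht.1.le, ht.2⟩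
      have hT0 : (∑ j, Fj j (bs j + 0 * v j)) = ∑ j, Fj j (bs j) :=
        Finset.sum_congr rfl (fun j _ => by norm_num)
      rw [slope_def_field]
      apply div_nonpos_of_nonpos_of_nonneg
      · rw [hT0]
        linarith
      · linarith [ht.1]
    -- concavity estimate for the true welfare integrals
    have hprbs : ∀ j, P j (ds j) = pr j (bs j) := fun j => by
      simp only [hprdef, hdsdef]
    have hconc : ∀ j, GP j (ds j + v j) - GP j (ds j) ≤ pr j (bs j) * v j := by
      intro j
      rcases lt_trichotomy (v j) 0 with hv | hv | hv
      · obtain ⟨ξ, hmem, hslope⟩ := exists_hasDerivAt_eq_slope (GP j) (P j)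
          (show ds j + v j < ds j by linarith)
          (fun y _ => (hGPderiv j y).continuousAt.continuousWithinAt)
          (fun y _ => hGPderiv j y)
        rw [eq_div_iff (by linarith : ds j - (ds j + v j) ≠ 0)] at hslope
        have hPge : P j (ds j) ≤ P j ξ := (hPanti j).antitone hmem.2.le
        have hmul : P j ξ * v j ≤ P j (ds j) * v j :=
          mul_le_mul_of_nonpos_right hPge hv.le
        have hid : P j ξ * (ds j - (ds j + v j)) = -(P j ξ * v j) := by ring
        rw [← hprbs j]
        linarith
      · rw [hv]
        simp
      · obtain ⟨ξ, hmem, hslope⟩ := exists_hasDerivAt_eq_slope (GP j) (P j)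
          (show ds j < ds j + v j by linarith)
          (fun y _ => (hGPderiv j y).continuousAt.continuousWithinAt)
          (fun y _ => hGPderiv j y)
        rw [eq_div_iff (by linarith : ds j + v j - ds j ≠ 0)] at hslope
        have hPle : P j ξ ≤ P j (ds j) := (hPanti j).antitone hmem.1.le
        have hmul : P j ξ * v j ≤ P j (ds j) * v j :=
          mul_le_mul_of_nonneg_right hPle hv.le
        have hid : P j ξ * (ds j + v j - ds j) = P j ξ * v j := by ring
        rw [← hprbs j]
        linarith
    -- put everything together
    have hdemf : ∀ j, demand B H f qs j = ds j + v j := by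
      intro j
      rw [demand, hr j]
      simp only [hvdef]
      ring
    rw [makerW, makerW]
    have hsum_le : (∑ j, ∫ s in (0:ℝ)..(demand B H f qs j), P j s) ≤
        ∑ j, ∫ s in (0:ℝ)..(demand B H fs qs j), P j s := by
      have e1 : (∑ j, ∫ s in (0:ℝ)..(demand B H f qs j), P j s) = ∑ j, GP j (ds j + v j) :=
        Finset.sum_congr rfl (fun j _ => by rw [hdemf j])
      have e2 : (∑ j, ∫ s in (0:ℝ)..(demand B H fs qs j), P j s) = ∑ j, GP j (ds j) :=
        Finset.sum_congr rfl (fun j _ => by rw [hdemand j])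
      rw [e1, e2]
      have e3 : ∑ j, GP j (ds j + v j) ≤ ∑ j, (GP j (ds j) + pr j (bs j) * v j) :=
        Finset.sum_le_sum (fun j _ => by linarith [hconc j])
      rw [Finset.sum_add_distrib] at e3
      linarith [hS]
    linarith
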